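/- arXiv:1509.06502 — 2 statements merged into one kernel-verified Lean document; each statement's English description precedes it below -/
import Mathlib

section
/- Let R be a reduced crystallographic root system with set of positive roots R⁺ and simple roots S, and let I be a proper subset of S. For every positive root β in R⁺ \ R_I⁺ one has ⟨2ρ^P − ρ − Σ_{α ∈ S\I} ϖ_α , β∨⟩ ≥ 0. -/
/-!
Common setup: a reduced crystallographic root system realized in a real inner
product space, together with a chosen set of simple roots.  For a root `α`,
`cpair v α = ⟨v, α∨⟩ = 2⟪v,α⟫/⟪α,α⟫` is the pairing with the coroot `α∨`, and
`sref α` is the reflection in `α`.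
-/

open scoped RealInnerProductSpace
open Finset

/-- `cpair v α = ⟨v, α∨⟩ = 2⟪v,α⟫/⟪α,α⟫`, the pairing of `v` with the coroot of `α`. -/
noncomputable def cpair {V : Type*} [NormedAddCommGroup V] [InnerProductSpace ℝ V]
    (v α : V) : ℝ := 2 * ⟪v, α⟫ / ⟪α, α⟫

/-- The reflection in the root `α`: `v ↦ v - ⟨v, α∨⟩ α`. -/
noncomputable def sref {V : Type*} [NormedAddCommGroup V] [InnerProductSpace ℝ V]
    (α : V) : V → V := fun v => v - cpair v α • α

/-- A reduced crystallographic root system in a real inner product space,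
with a chosen set of simple roots (every root is an integral linear combination
of the simple roots, with coefficients all nonnegative or all nonpositive). -/
structure RCRS (V : Type*) [NormedAddCommGroup V] [InnerProductSpace ℝ V] where
  roots : Finset V
  zero_not_mem : (0 : V) ∉ roots
  crystallographic : ∀ α ∈ roots, ∀ β ∈ roots, ∃ n : ℤ, cpair β α = (n : ℝ)
  reflect_mem : ∀ α ∈ roots, ∀ β ∈ roots, sref α β ∈ roots
  reduced : ∀ α ∈ roots, ∀ t : ℝ, t • α ∈ roots → t = 1 ∨ t = -1
  simple : Finset V
  simple_subset : simple ⊆ roots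
  simple_indep : LinearIndependent ℝ ((↑) : simple → V)
  exists_coeffs : ∀ β ∈ roots, ∃ c : V → ℤ,
    ((∀ α ∈ simple, 0 ≤ c α) ∨ (∀ α ∈ simple, c α ≤ 0)) ∧
    β = ∑ α ∈ simple, (c α : ℝ) • α

namespace RCRS

variable {V : Type*} [NormedAddCommGroup V] [InnerProductSpace ℝ V] [DecidableEq V] (Φ : RCRS V)

set_option linter.unusedSectionVars false

open Classical in
/-- `R⁺`: the set of positive roots, i.e. the roots that are nonnegative integral
linear combinations of simple roots. -/
noncomputable def posRoots : Finset V :=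
  Φ.roots.filter (fun β => ∃ c : V → ℤ, (∀ α ∈ Φ.simple, 0 ≤ c α) ∧
    β = ∑ α ∈ Φ.simple, (c α : ℝ) • α)

open Classical in
/-- `R_I⁺`: the set of positive roots that are integral linear combinations of the
simple roots belonging to `I`. -/
noncomputable def posRootsOf (I : Finset V) : Finset V :=
  Φ.posRoots.filter (fun β => ∃ c : V → ℤ, β = ∑ α ∈ I, (c α : ℝ) • α)

/-- `ρ`: the half sum of the positive roots. -/
noncomputable def rho : V := (2 : ℝ)⁻¹ • ∑ β ∈ Φ.posRoots, β

/-- `ρ^P`: the half sum of the positive roots that are not in `R_I⁺`. -/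
noncomputable def rhoP (I : Finset V) : V :=
  (2 : ℝ)⁻¹ • ∑ β ∈ Φ.posRoots \ Φ.posRootsOf I, β

/-- `ϖ` is a system of fundamental weights: `⟨ϖ α, β∨⟩ = δ_{α β}` for simple `α`, `β`. -/
def IsFundamentalWeights (ϖ : V → V) : Prop :=
  ∀ α ∈ Φ.simple, ∀ β ∈ Φ.simple, cpair (ϖ α) β = if α = β then 1 else 0

/-- The product of the reflections in the roots listed in `l`
(`wordProd [α₁, …, α_N] = s_{α₁} ∘ ⋯ ∘ s_{α_N}`). -/
noncomputable def wordProd : List V → (V → V) :=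
  fun l => l.foldr (fun α f => sref α ∘ f) id

/-- Membership in the subgroup of the Weyl group generated by the reflections
`s_α`, `α ∈ I`. -/
def MemWeyl (I : Finset V) (w : V → V) : Prop :=
  ∃ l : List V, (∀ α ∈ l, α ∈ I) ∧ w = wordProd l

/-- The length of `w` with respect to the generators `s_α`, `α ∈ I`. -/
noncomputable def lengthWeyl (I : Finset V) (w : V → V) : ℕ :=
  sInf {n | ∃ l : List V, l.length = n ∧ (∀ α ∈ l, α ∈ I) ∧ w = wordProd l}

/-- `w` is the longest element of the subgroup generated by the reflections
`s_α`, `α ∈ I`. -/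
def IsLongest (I : Finset V) (w : V → V) : Prop :=
  MemWeyl I w ∧ ∀ u, MemWeyl I u → lengthWeyl I u ≤ lengthWeyl I w

end RCRS

section Aux

variable {V : Type*} [NormedAddCommGroup V] [InnerProductSpace ℝ V]

lemma cpair_add_left (u v α : V) : cpair (u + v) α = cpair u α + cpair v α := by
  simp [cpair, inner_add_left]; ring

lemma cpair_smul_left (a : ℝ) (u α : V) : cpair (a • u) α = a * cpair u α := by
  simp [cpair, real_inner_smul_left]; ring

lemma cpair_neg_left (u α : V) : cpair (-u) α = - cpair u α := by
  simp [cpair, inner_neg_left]; ring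

lemma cpair_sub_left (u v α : V) : cpair (u - v) α = cpair u α - cpair v α := by
  simp [cpair, inner_sub_left]; ring

lemma cpair_sum_left {ι : Type*} (s : Finset ι) (f : ι → V) (α : V) :
    cpair (∑ i ∈ s, f i) α = ∑ i ∈ s, cpair (f i) α := by
  simp [cpair, sum_inner, Finset.sum_div, Finset.mul_sum]

lemma cpair_self {α : V} (hα : α ≠ 0) : cpair α α = 2 := by
  have h : ⟪α, α⟫ ≠ 0 := by
    simpa [inner_self_eq_zero] using hα
  unfold cpair; rw [mul_div_assoc, div_self h, mul_one]

lemma inner_eq_cpair (v : V) {α : V} (hα : α ≠ 0) : ⟪v, α⟫ = cpair v α * ⟪α, α⟫ / 2 := by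
  have h : ⟪α, α⟫ ≠ 0 := by simpa [inner_self_eq_zero] using hα
  rw [cpair, div_mul_cancel₀ _ h]; ring

lemma sref_apply (α v : V) : sref α v = v - cpair v α • α := rfl

lemma sref_add (α u v : V) : sref α (u + v) = sref α u + sref α v := by
  simp [sref_apply, cpair_add_left, add_smul]; abel

lemma sref_smul (α : V) (a : ℝ) (v : V) : sref α (a • v) = a • sref α v := by
  simp [sref_apply, cpair_smul_left, smul_sub, mul_smul]

lemma sref_neg (α v : V) : sref α (-v) = - sref α v := by
  simp [sref_apply, cpair_neg_left]; abel

lemma sref_sub (α u v : V) : sref α (u - v) = sref α u - sref α v := by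
  simp [sref_apply, cpair_sub_left, sub_smul]; abel

lemma sref_sum {ι : Type*} (α : V) (s : Finset ι) (f : ι → V) :
    sref α (∑ i ∈ s, f i) = ∑ i ∈ s, sref α (f i) := by
  simp [sref_apply, cpair_sum_left, Finset.sum_smul, Finset.sum_sub_distrib]

lemma sref_self {α : V} (hα : α ≠ 0) : sref α α = -α := by
  rw [sref_apply, cpair_self hα]
  module

lemma sref_inner (α u v : V) : ⟪sref α u, sref α v⟫ = ⟪u, v⟫ := by
  by_cases hα : α = 0
  · simp [sref_apply, cpair, hα]
  have h : ⟪α, α⟫ ≠ 0 := by simpa [inner_self_eq_zero] using hα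
  simp only [sref_apply, cpair, inner_sub_left, inner_sub_right, real_inner_smul_left,
    real_inner_smul_right]
  rw [real_inner_comm α u, real_inner_comm v α]
  field_simp
  ring

lemma sref_sref (α v : V) : sref α (sref α v) = v := by
  by_cases hα : α = 0
  · simp [sref_apply, cpair, hα]
  have h : ⟪α, α⟫ ≠ 0 := by simpa [inner_self_eq_zero] using hα
  rw [sref_apply, sref_apply, cpair_sub_left, cpair_smul_left, cpair_self hα]
  module

lemma sref_injective (α : V) : Function.Injective (sref α) :=
  Function.LeftInverse.injective (g := sref α) (fun v => sref_sref α v)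

end Aux

namespace RCRS

variable {V : Type*} [NormedAddCommGroup V] [InnerProductSpace ℝ V] [DecidableEq V] (Φ : RCRS V)

set_option linter.unusedSectionVars false

lemma root_ne_zero {β : V} (hβ : β ∈ Φ.roots) : β ≠ 0 := fun h => Φ.zero_not_mem (h ▸ hβ)

lemma neg_root_mem {β : V} (hβ : β ∈ Φ.roots) : -β ∈ Φ.roots := by
  have := Φ.reflect_mem β hβ β hβ
  rwa [sref_self (Φ.root_ne_zero hβ)] at this

lemma coeff_unique {f g : V → ℝ}
    (h : ∑ α ∈ Φ.simple, f α • α = ∑ α ∈ Φ.simple, g α • α) :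
    ∀ α ∈ Φ.simple, f α = g α := by
  have hli := linearIndependent_iff'.mp Φ.simple_indep Finset.univ
    (fun i => f i.1 - g i.1)
  have hsum : ∑ i : Φ.simple, (f i.1 - g i.1) • (i.1 : V) = 0 := by
    have h2 : ∑ i : Φ.simple, (f i.1 - g i.1) • (i.1 : V)
        = ∑ α ∈ Φ.simple, (f α - g α) • α :=
      Finset.sum_coe_sort Φ.simple (fun α => (f α - g α) • α)
    rw [h2]
    simp only [sub_smul, Finset.sum_sub_distrib, h, sub_self]
  intro α hα
  have := hli hsum ⟨α, hα⟩ (Finset.mem_univ _)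
  linarith [this]

lemma mem_posRoots {β : V} : β ∈ Φ.posRoots ↔ β ∈ Φ.roots ∧ ∃ c : V → ℤ,
    (∀ α ∈ Φ.simple, 0 ≤ c α) ∧ β = ∑ α ∈ Φ.simple, (c α : ℝ) • α := by
  classical
  simp [posRoots, Finset.mem_filter]

lemma mem_posRootsOf {I : Finset V} {β : V} : β ∈ Φ.posRootsOf I ↔ β ∈ Φ.posRoots ∧
    ∃ c : V → ℤ, β = ∑ α ∈ I, (c α : ℝ) • α := by
  classical
  simp [posRootsOf, Finset.mem_filter]

lemma posRoots_subset : Φ.posRoots ⊆ Φ.roots := by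
  intro β hβ; exact ((Φ.mem_posRoots).mp hβ).1

lemma posRootsOf_subset (I : Finset V) : Φ.posRootsOf I ⊆ Φ.posRoots := by
  intro β hβ; exact ((Φ.mem_posRootsOf).mp hβ).1

/-- A root is positive or its negative is. -/
lemma pos_or_neg_pos {β : V} (hβ : β ∈ Φ.roots) :
    β ∈ Φ.posRoots ∨ -β ∈ Φ.posRoots := by
  obtain ⟨c, hc | hc, hsum⟩ := Φ.exists_coeffs β hβ
  · exact Or.inl (Φ.mem_posRoots.mpr ⟨hβ, c, hc, hsum⟩)
  · refine Or.inr (Φ.mem_posRoots.mpr ⟨Φ.neg_root_mem hβ, fun α => -c α, ?_, ?_⟩)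
    · intro α hα; simpa using hc α hα
    · rw [hsum]; simp [Finset.sum_neg_distrib, neg_smul]

lemma neg_not_pos {β : V} (hβ : β ∈ Φ.posRoots) : -β ∉ Φ.posRoots := by
  intro hn
  obtain ⟨hβr, c, hc, hsum⟩ := Φ.mem_posRoots.mp hβ
  obtain ⟨hnr, d, hd, hnsum⟩ := Φ.mem_posRoots.mp hn
  have hz : ∑ α ∈ Φ.simple, ((fun α => (c α : ℝ) + d α) α) • α
      = ∑ α ∈ Φ.simple, ((fun _ => (0:ℝ)) α) • α := by
    simp only [add_smul, Finset.sum_add_distrib, ← hsum, ← hnsum]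
    simp
  have hcu := Φ.coeff_unique hz
  have : β = 0 := by
    rw [hsum]
    refine Finset.sum_eq_zero (fun α hα => ?_)
    have h1 := hcu α hα
    have hc0 : (0:ℝ) ≤ (c α : ℝ) := by exact_mod_cast hc α hα
    have hd0 : (0:ℝ) ≤ (d α : ℝ) := by exact_mod_cast hd α hα
    have : (c α : ℝ) = 0 := by have h1' : (c α : ℝ) + d α = 0 := h1; linarith
    rw [this, zero_smul]
  exact Φ.root_ne_zero hβr this

lemma simple_mem_posRoots {α : V} (hα : α ∈ Φ.simple) : α ∈ Φ.posRoots := by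
  refine Φ.mem_posRoots.mpr ⟨Φ.simple_subset hα, fun γ => if γ = α then 1 else 0, ?_, ?_⟩
  · intro γ _; dsimp only; split <;> simp
  · rw [eq_comm]
    rw [Finset.sum_congr rfl (g := fun γ => if γ = α then α else 0)
      (fun γ _ => by by_cases hγ : γ = α <;> simp [hγ])]
    simp [Finset.sum_ite_eq', hα]

lemma simple_mem_posRootsOf {I : Finset V} (hI : I ⊆ Φ.simple) {α : V} (hα : α ∈ I) :
    α ∈ Φ.posRootsOf I := by
  refine Φ.mem_posRootsOf.mpr ⟨Φ.simple_mem_posRoots (hI hα), fun γ => if γ = α then 1 else 0, ?_⟩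
  rw [eq_comm]
  rw [Finset.sum_congr rfl (g := fun γ => if γ = α then α else 0)
    (fun γ _ => by by_cases hγ : γ = α <;> simp [hγ])]
  simp [Finset.sum_ite_eq', hα]


lemma sum_sub_ite {s : Finset V} {α : V} (hα : α ∈ s) (c : V → ℤ) (n : ℤ) :
    ∑ γ ∈ s, ((c γ - if γ = α then n else 0 : ℤ) : ℝ) • γ
      = (∑ γ ∈ s, (c γ : ℝ) • γ) - (n : ℝ) • α := by
  have : ∀ γ ∈ s, ((c γ - if γ = α then n else 0 : ℤ) : ℝ) • γ
      = (c γ : ℝ) • γ - (if γ = α then (n : ℝ) • α else 0) := by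
    intro γ _
    by_cases h : γ = α <;> simp [h, sub_smul]
  rw [Finset.sum_congr rfl this, Finset.sum_sub_distrib]
  congr 1
  simp [Finset.sum_ite_eq', hα]

/-- Reflection in a simple root permutes the positive roots other than it. -/
lemma sref_pos {α β : V} (hα : α ∈ Φ.simple) (hβ : β ∈ Φ.posRoots) (hne : β ≠ α) :
    sref α β ∈ Φ.posRoots := by
  obtain ⟨hβr, c, hc, hsum⟩ := Φ.mem_posRoots.mp hβ
  have hαr : α ∈ Φ.roots := Φ.simple_subset hα
  -- find γ ≠ α with positive coefficient
  have hex : ∃ γ ∈ Φ.simple, γ ≠ α ∧ 0 < c γ := by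
    by_contra h'
    push_neg at h'
    have hzero : ∀ γ ∈ Φ.simple, γ ≠ α → c γ = 0 := fun γ hγ hgne =>
      le_antisymm (h' γ hγ hgne) (hc γ hγ)
    have hβα : β = (c α : ℝ) • α := by
      rw [hsum, Finset.sum_eq_single_of_mem α hα]
      intro γ hγ hgne
      rw [hzero γ hγ hgne]; simp
    have := Φ.reduced α hαr (c α : ℝ) (by rw [← hβα]; exact hβr)
    rcases this with h1 | h1
    · exact hne (by rw [hβα, h1, one_smul])
    · have : (0:ℝ) ≤ (c α : ℝ) := by exact_mod_cast hc α hα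
      rw [h1] at this; linarith
  obtain ⟨γ, hγS, hγne, hγpos⟩ := hex
  obtain ⟨n, hn⟩ := Φ.crystallographic α hαr β hβr
  have hsr : sref α β ∈ Φ.roots := Φ.reflect_mem α hαr β hβr
  have hexp : sref α β = ∑ μ ∈ Φ.simple, ((c μ - if μ = α then n else 0 : ℤ) : ℝ) • μ := by
    rw [sum_sub_ite hα, ← hsum, sref_apply, hn]
  obtain ⟨d, hd | hd, hdsum⟩ := Φ.exists_coeffs _ hsr
  · exact Φ.mem_posRoots.mpr ⟨hsr, d, hd, hdsum⟩
  · exfalso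
    have := Φ.coeff_unique (f := fun μ => ((c μ - if μ = α then n else 0 : ℤ) : ℝ))
      (g := fun μ => (d μ : ℝ)) (by rw [← hexp, ← hdsum]) γ hγS
    simp only [hγne, if_neg] at this
    have hdγ : (d γ : ℝ) ≤ 0 := by exact_mod_cast hd γ hγS
    have : ((c γ : ℝ) - 0) = (d γ : ℝ) := by simpa [hγne] using this
    have hcγ : (0:ℝ) < (c γ : ℝ) := by exact_mod_cast hγpos
    linarith

lemma sref_ne {α β : V} (hα : α ∈ Φ.simple) (hβ : β ∈ Φ.posRoots) : sref α β ≠ α := by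
  intro h
  have : β = -α := by
    have := congrArg (sref α) h
    rwa [sref_sref, sref_self (Φ.root_ne_zero (Φ.simple_subset hα))] at this
  exact Φ.neg_not_pos (Φ.simple_mem_posRoots hα) (this ▸ hβ)

lemma sref_posOf {I : Finset V} (hI : I ⊆ Φ.simple) {α δ : V} (hα : α ∈ I)
    (hδ : δ ∈ Φ.posRootsOf I) (hne : δ ≠ α) : sref α δ ∈ Φ.posRootsOf I := by
  obtain ⟨hδpos, c, hsum⟩ := Φ.mem_posRootsOf.mp hδ
  have hδr : δ ∈ Φ.roots := Φ.posRoots_subset hδpos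
  obtain ⟨n, hn⟩ := Φ.crystallographic α (Φ.simple_subset (hI hα)) δ hδr
  refine Φ.mem_posRootsOf.mpr ⟨Φ.sref_pos (hI hα) hδpos hne,
    fun μ => c μ - if μ = α then n else 0, ?_⟩
  rw [sum_sub_ite hα, ← hsum, sref_apply, hn]

lemma sref_P {I : Finset V} (hI : I ⊆ Φ.simple) {α β : V} (hα : α ∈ I)
    (hβpos : β ∈ Φ.posRoots) (hβnot : β ∉ Φ.posRootsOf I) :
    sref α β ∈ Φ.posRoots ∧ sref α β ∉ Φ.posRootsOf I := by
  have hne : β ≠ α := fun h => hβnot (h ▸ Φ.simple_mem_posRootsOf hI hα)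
  refine ⟨Φ.sref_pos (hI hα) hβpos hne, ?_⟩
  intro hmem
  obtain ⟨_, e, hsum⟩ := Φ.mem_posRootsOf.mp hmem
  obtain ⟨n, hn⟩ := Φ.crystallographic α (Φ.simple_subset (hI hα)) β (Φ.posRoots_subset hβpos)
  apply hβnot
  refine Φ.mem_posRootsOf.mpr ⟨hβpos, fun μ => e μ - if μ = α then -n else 0, ?_⟩
  rw [sum_sub_ite hα, ← hsum]
  push_cast
  rw [sref_apply, hn]
  module

/-- `⟨2ρ, α∨⟩ = 2` for a simple root `α`. -/
lemma cpair_possum_simple {α : V} (hα : α ∈ Φ.simple) :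
    cpair (∑ β ∈ Φ.posRoots, β) α = 2 := by
  have hαpos := Φ.simple_mem_posRoots hα
  have hαne : α ≠ 0 := Φ.root_ne_zero (Φ.simple_subset hα)
  rw [← Finset.add_sum_erase _ _ hαpos, cpair_add_left, cpair_self hαne, cpair_sum_left]
  have himg : (Φ.posRoots.erase α).image (sref α) = Φ.posRoots.erase α := by
    apply Finset.eq_of_subset_of_card_le
    · intro x hx
      obtain ⟨β, hβ, rfl⟩ := Finset.mem_image.mp hx
      obtain ⟨hβne, hβpos⟩ := Finset.mem_erase.mp hβ
      exact Finset.mem_erase.mpr ⟨Φ.sref_ne hα hβpos, Φ.sref_pos hα hβpos hβne⟩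
    · rw [Finset.card_image_of_injective _ (sref_injective α)]
  have hre : ∑ β ∈ Φ.posRoots.erase α, cpair β α
      = ∑ β ∈ Φ.posRoots.erase α, cpair (sref α β) α := by
    conv_lhs => rw [← himg]
    rw [Finset.sum_image (fun x _ y _ h => sref_injective α h)]
  have hflip : ∀ β : V, cpair (sref α β) α = - cpair β α := by
    intro β
    rw [sref_apply, cpair_sub_left, cpair_smul_left, cpair_self hαne]
    ring
  simp only [hflip] at hre
  rw [Finset.sum_neg_distrib] at hre
  have : ∑ β ∈ Φ.posRoots.erase α, cpair β α = 0 := by linarith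
  rw [this]; ring

lemma cpair_rho_simple {α : V} (hα : α ∈ Φ.simple) : cpair Φ.rho α = 1 := by
  rw [rho, cpair_smul_left, Φ.cpair_possum_simple hα]
  norm_num


/-- The action of a word of reflections: `act [α₁, …, α_N] = s_{α₁} ∘ ⋯ ∘ s_{α_N}`. -/
noncomputable def act : List V → V → V
  | [], v => v
  | α :: l, v => sref α (act l v)

@[simp] lemma act_nil (v : V) : act [] v = v := rfl

@[simp] lemma act_cons (α : V) (l : List V) (v : V) : act (α :: l) v = sref α (act l v) := rfl

lemma act_append (l₁ l₂ : List V) (v : V) : act (l₁ ++ l₂) v = act l₁ (act l₂ v) := by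
  induction l₁ with
  | nil => simp
  | cons α l ih => simp [ih]

lemma act_add (l : List V) (u v : V) : act l (u + v) = act l u + act l v := by
  induction l with
  | nil => simp
  | cons α l ih => simp [ih, sref_add]

lemma act_smul (l : List V) (a : ℝ) (v : V) : act l (a • v) = a • act l v := by
  induction l with
  | nil => simp
  | cons α l ih => simp [ih, sref_smul]

lemma act_neg (l : List V) (v : V) : act l (-v) = - act l v := by
  induction l with
  | nil => simp
  | cons α l ih => simp [ih, sref_neg]

lemma act_sub (l : List V) (u v : V) : act l (u - v) = act l u - act l v := by
  induction l with
  | nil => simp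
  | cons α l ih => simp [ih, sref_sub]

lemma act_sum {ι : Type*} (l : List V) (s : Finset ι) (f : ι → V) :
    act l (∑ i ∈ s, f i) = ∑ i ∈ s, act l (f i) := by
  induction l with
  | nil => simp
  | cons α l ih => simp [ih, sref_sum]

lemma act_inner (l : List V) (u v : V) : ⟪act l u, act l v⟫ = ⟪u, v⟫ := by
  induction l with
  | nil => simp
  | cons α l ih => simp [sref_inner, ih]

lemma act_injective (l : List V) : Function.Injective (act l) := by
  intro u v h
  have h2 : act l (u - v) = 0 := by rw [act_sub, h, sub_self]
  have h3 : ⟪u - v, u - v⟫ = (0:ℝ) := by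
    rw [← act_inner l, h2, inner_zero_left]
  have := inner_self_eq_zero.mp h3
  exact sub_eq_zero.mp this

lemma act_root {l : List V} (hl : ∀ α ∈ l, α ∈ Φ.roots) {β : V} (hβ : β ∈ Φ.roots) :
    act l β ∈ Φ.roots := by
  induction l with
  | nil => simpa
  | cons α l ih =>
    exact Φ.reflect_mem α (hl α (List.mem_cons_self)) _
      (ih (fun γ hγ => hl γ (List.mem_cons_of_mem α hγ)))

lemma act_P {I : Finset V} (hI : I ⊆ Φ.simple) {l : List V} (hl : ∀ α ∈ l, α ∈ I) {β : V}
    (hβpos : β ∈ Φ.posRoots) (hβnot : β ∉ Φ.posRootsOf I) :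
    act l β ∈ Φ.posRoots ∧ act l β ∉ Φ.posRootsOf I := by
  induction l with
  | nil => exact ⟨hβpos, by simpa⟩
  | cons α l ih =>
    obtain ⟨h1, h2⟩ := ih (fun γ hγ => hl γ (List.mem_cons_of_mem α hγ))
    exact Φ.sref_P hI (hl α (List.mem_cons_self)) h1 h2

lemma act_ZI {I : Finset V} (hI : I ⊆ Φ.simple) {l : List V} (hl : ∀ α ∈ l, α ∈ I) {β : V}
    (hβr : β ∈ Φ.roots) (h : ∃ c : V → ℤ, β = ∑ γ ∈ I, (c γ : ℝ) • γ) :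
    ∃ c : V → ℤ, act l β = ∑ γ ∈ I, (c γ : ℝ) • γ := by
  induction l with
  | nil => simpa
  | cons α l ih =>
    obtain ⟨c, hc⟩ := ih (fun γ hγ => hl γ (List.mem_cons_of_mem α hγ))
    have hαI : α ∈ I := hl α (List.mem_cons_self)
    have hlr : act l β ∈ Φ.roots :=
      Φ.act_root (fun γ hγ => Φ.simple_subset (hI (hl γ (List.mem_cons_of_mem α hγ)))) hβr
    obtain ⟨n, hn⟩ := Φ.crystallographic α (Φ.simple_subset (hI hαI)) _ hlr
    refine ⟨fun μ => c μ - if μ = α then n else 0, ?_⟩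
    rw [sum_sub_ite hαI, ← hc, act_cons, sref_apply, hn]


lemma neg_coeffs {β : V} (hβr : β ∈ Φ.roots) (hβ : β ∉ Φ.posRoots) :
    ∃ c : V → ℤ, (∀ γ ∈ Φ.simple, c γ ≤ 0) ∧ β = ∑ γ ∈ Φ.simple, (c γ : ℝ) • γ := by
  obtain ⟨c, hc | hc, hsum⟩ := Φ.exists_coeffs β hβr
  · exact absurd (Φ.mem_posRoots.mpr ⟨hβr, c, hc, hsum⟩) hβ
  · exact ⟨c, hc, hsum⟩

lemma posOf_coeffs {I : Finset V} (hI : I ⊆ Φ.simple) {δ : V} (hδ : δ ∈ Φ.posRootsOf I) :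
    ∃ d : V → ℤ, (∀ γ ∈ I, 0 ≤ d γ) ∧ δ = ∑ γ ∈ I, (d γ : ℝ) • γ := by
  obtain ⟨hδpos, c, hc⟩ := Φ.mem_posRootsOf.mp hδ
  obtain ⟨_, e, he, hesum⟩ := Φ.mem_posRoots.mp hδpos
  have hce : ∑ γ ∈ Φ.simple, ((if γ ∈ I then c γ else 0 : ℤ) : ℝ) • γ
      = ∑ γ ∈ I, (c γ : ℝ) • γ := by
    rw [← Finset.sum_subset hI (fun γ _ hγ => by simp [hγ])]
    exact Finset.sum_congr rfl (fun γ hγ => by simp [hγ])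
  have hcu := Φ.coeff_unique (f := fun γ => (e γ : ℝ))
    (g := fun γ => ((if γ ∈ I then c γ else 0 : ℤ) : ℝ)) (by rw [← hesum, hce, ← hc])
  refine ⟨c, fun γ hγ => ?_, hc⟩
  have := hcu γ (hI hγ)
  simp only [hγ, if_pos] at this
  have h0 : (0:ℝ) ≤ (e γ : ℝ) := by exact_mod_cast he γ (hI hγ)
  exact_mod_cast this ▸ h0

lemma exists_simple_pos {I : Finset V} (hI : I ⊆ Φ.simple) {l : List V}
    (hl : ∀ α ∈ l, α ∈ I) {δ : V} (hδ : δ ∈ Φ.posRootsOf I)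
    (hpos : act l δ ∈ Φ.posRoots) : ∃ α ∈ I, act l α ∈ Φ.posRoots := by
  by_contra h'
  push_neg at h'
  have hlr : ∀ γ ∈ l, γ ∈ Φ.roots := fun γ hγ => Φ.simple_subset (hI (hl γ hγ))
  obtain ⟨d, hd, hdsum⟩ := Φ.posOf_coeffs hI hδ
  have h'' : ∀ γ : V, ∃ m : V → ℤ, γ ∈ I →
      ((∀ μ ∈ Φ.simple, m μ ≤ 0) ∧ act l γ = ∑ μ ∈ Φ.simple, (m μ : ℝ) • μ) := by
    intro γ
    by_cases hγ : γ ∈ I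
    · obtain ⟨m, hm1, hm2⟩ := Φ.neg_coeffs (Φ.act_root hlr (Φ.simple_subset (hI hγ)))
        (h' γ hγ)
      exact ⟨m, fun _ => ⟨hm1, hm2⟩⟩
    · exact ⟨0, fun h => absurd h hγ⟩
  choose m hm using h''
  have hexp : act l δ = ∑ μ ∈ Φ.simple, (∑ γ ∈ I, (d γ : ℝ) * (m γ μ : ℝ)) • μ := by
    rw [hdsum, act_sum]
    simp only [act_smul]
    rw [Finset.sum_congr rfl (fun γ hγ => by rw [(hm γ hγ).2])]
    simp only [Finset.smul_sum, smul_smul]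
    rw [Finset.sum_comm]
    exact Finset.sum_congr rfl (fun μ _ => (Finset.sum_smul).symm)
  obtain ⟨hr, e, he, hesum⟩ := Φ.mem_posRoots.mp hpos
  have hcu := Φ.coeff_unique (f := fun μ => (e μ : ℝ))
    (g := fun μ => ∑ γ ∈ I, (d γ : ℝ) * (m γ μ : ℝ)) (by rw [← hesum, ← hexp])
  have hzero : ∀ μ ∈ Φ.simple, (e μ : ℝ) = 0 := by
    intro μ hμ
    have h1 : (e μ : ℝ) = ∑ γ ∈ I, (d γ : ℝ) * (m γ μ : ℝ) := hcu μ hμ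
    have h2 : ∑ γ ∈ I, (d γ : ℝ) * (m γ μ : ℝ) ≤ 0 := by
      apply Finset.sum_nonpos
      intro γ hγ
      have hd0 : (0:ℝ) ≤ (d γ : ℝ) := by exact_mod_cast hd γ hγ
      have hm0 : (m γ μ : ℝ) ≤ 0 := by exact_mod_cast (hm γ hγ).1 μ hμ
      exact mul_nonpos_of_nonneg_of_nonpos hd0 hm0
    have h3 : (0:ℝ) ≤ (e μ : ℝ) := by exact_mod_cast he μ hμ
    linarith
  have : act l δ = 0 := by
    rw [hesum]
    exact Finset.sum_eq_zero (fun μ hμ => by rw [hzero μ hμ, zero_smul])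
  exact Φ.zero_not_mem (this ▸ hr)

open Classical in
lemma exists_killing_word {I : Finset V} (hI : I ⊆ Φ.simple) :
    ∀ n : ℕ, ∀ l : List V, (∀ α ∈ l, α ∈ I) →
    ((Φ.posRootsOf I).filter (fun δ => act l δ ∈ Φ.posRoots)).card = n →
    ∃ L : List V, (∀ α ∈ L, α ∈ I) ∧ ∀ δ ∈ Φ.posRootsOf I, act L δ ∉ Φ.posRoots := by
  intro n
  induction n using Nat.strong_induction_on with
  | _ n ih =>
    intro l hl hcard
    by_cases hA : ((Φ.posRootsOf I).filter (fun δ => act l δ ∈ Φ.posRoots)) = ∅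
    · refine ⟨l, hl, fun δ hδ hpos => ?_⟩
      have : δ ∈ ((Φ.posRootsOf I).filter (fun δ => act l δ ∈ Φ.posRoots)) :=
        Finset.mem_filter.mpr ⟨hδ, hpos⟩
      rw [hA] at this
      simp at this
    · obtain ⟨δ₀, hδ₀⟩ := Finset.nonempty_of_ne_empty hA
      obtain ⟨hδ₀Of, hδ₀pos⟩ := Finset.mem_filter.mp hδ₀
      obtain ⟨α, hαI, hαpos⟩ := Φ.exists_simple_pos hI hl hδ₀Of hδ₀pos
      set A := ((Φ.posRootsOf I).filter (fun δ => act l δ ∈ Φ.posRoots)) with hAdef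
      have hαA : α ∈ A := Finset.mem_filter.mpr ⟨Φ.simple_mem_posRootsOf hI hαI, hαpos⟩
      have hact : ∀ v, act (l ++ [α]) v = act l (sref α v) := fun v => by
        rw [act_append]; rfl
      have hαne : (α:V) ≠ 0 := Φ.root_ne_zero (Φ.simple_subset (hI hαI))
      have himg : ((Φ.posRootsOf I).filter (fun δ => act (l ++ [α]) δ ∈ Φ.posRoots))
          = (A.erase α).image (sref α) := by
        ext δ
        constructor
        · intro hδ
          obtain ⟨hδOf, hδpos⟩ := Finset.mem_filter.mp hδ
          rw [hact] at hδpos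
          have hδα : δ ≠ α := by
            rintro rfl
            rw [sref_self hαne, act_neg] at hδpos
            exact Φ.neg_not_pos hαpos hδpos
          have h1 : sref α δ ∈ Φ.posRootsOf I := Φ.sref_posOf hI hαI hδOf hδα
          have h2 : sref α δ ≠ α := Φ.sref_ne (hI hαI) (Φ.posRootsOf_subset I hδOf)
          refine Finset.mem_image.mpr ⟨sref α δ, Finset.mem_erase.mpr ⟨h2, ?_⟩, sref_sref α δ⟩
          exact Finset.mem_filter.mpr ⟨h1, hδpos⟩
        · intro hδ
          obtain ⟨ε, hε, rfl⟩ := Finset.mem_image.mp hδ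
          obtain ⟨hεα, hεA⟩ := Finset.mem_erase.mp hε
          obtain ⟨hεOf, hεpos⟩ := Finset.mem_filter.mp hεA
          refine Finset.mem_filter.mpr ⟨Φ.sref_posOf hI hαI hεOf hεα, ?_⟩
          rw [hact, sref_sref]
          exact hεpos
      have hcard' : ((Φ.posRootsOf I).filter
          (fun δ => act (l ++ [α]) δ ∈ Φ.posRoots)).card = n - 1 := by
        rw [himg, Finset.card_image_of_injective _ (sref_injective α),
          Finset.card_erase_of_mem hαA, hcard]
      have hn : 0 < n := by
        rw [← hcard]
        exact Finset.card_pos.mpr ⟨δ₀, hδ₀⟩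
      exact ih (n - 1) (Nat.sub_lt hn one_pos) (l ++ [α])
        (fun γ hγ => by
          rcases List.mem_append.mp hγ with h | h
          · exact hl γ h
          · simpa using (List.mem_singleton.mp h) ▸ hαI) hcard'


lemma rho_eq : Φ.rho = (2:ℝ)⁻¹ • ∑ β ∈ Φ.posRoots, β := rfl

lemma rhoP_eq (I : Finset V) :
    Φ.rhoP I = (2:ℝ)⁻¹ • ∑ β ∈ Φ.posRoots \ Φ.posRootsOf I, β := rfl

lemma sum_image_eq {s : Finset V} {φ : V → V} (hinj : Function.Injective φ)
    (hmem : ∀ x ∈ s, φ x ∈ s) : ∑ x ∈ s, φ x = ∑ x ∈ s, x := by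
  have himg : s.image φ = s := by
    apply Finset.eq_of_subset_of_card_le
    · intro y hy
      obtain ⟨x, hx, rfl⟩ := Finset.mem_image.mp hy
      exact hmem x hx
    · rw [Finset.card_image_of_injective _ hinj]
  have h2 : ∑ y ∈ s.image φ, y = ∑ x ∈ s, φ x :=
    Finset.sum_image (fun x _ y _ h => hinj h)
  rw [himg] at h2
  exact h2.symm

lemma act_negates_Isum {I : Finset V} (hI : I ⊆ Φ.simple) {L : List V}
    (hL : ∀ α ∈ L, α ∈ I) (hkill : ∀ δ ∈ Φ.posRootsOf I, act L δ ∉ Φ.posRoots) :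
    act L (∑ δ ∈ Φ.posRootsOf I, δ) = - ∑ δ ∈ Φ.posRootsOf I, δ := by
  have hLr : ∀ γ ∈ L, γ ∈ Φ.roots := fun γ hγ => Φ.simple_subset (hI (hL γ hγ))
  have hmem : ∀ δ ∈ Φ.posRootsOf I, - act L δ ∈ Φ.posRootsOf I := by
    intro δ hδ
    have hδr : δ ∈ Φ.roots := Φ.posRoots_subset (Φ.posRootsOf_subset I hδ)
    have hactr : act L δ ∈ Φ.roots := Φ.act_root hLr hδr
    obtain ⟨c, hc, hcsum⟩ := Φ.neg_coeffs hactr (hkill δ hδ)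
    have hpos : - act L δ ∈ Φ.posRoots := by
      refine Φ.mem_posRoots.mpr ⟨Φ.neg_root_mem hactr, fun γ => - c γ, ?_, ?_⟩
      · intro γ hγ; simpa using hc γ hγ
      · rw [hcsum]; simp [neg_smul]
    obtain ⟨c', hc'⟩ := Φ.act_ZI hI hL hδr (Φ.mem_posRootsOf.mp hδ).2
    refine Φ.mem_posRootsOf.mpr ⟨hpos, fun γ => - c' γ, ?_⟩
    rw [hc']; simp [neg_smul]
  have hinj : Function.Injective (fun δ : V => - act L δ) := by
    intro u v h
    simp only [neg_inj] at h
    exact act_injective L h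
  have h3 := sum_image_eq hinj hmem
  rw [act_sum]
  rw [Finset.sum_neg_distrib] at h3
  exact neg_eq_iff_eq_neg.mp h3

lemma act_fixes_Psum {I : Finset V} (hI : I ⊆ Φ.simple) {L : List V}
    (hL : ∀ α ∈ L, α ∈ I) :
    act L (∑ γ ∈ Φ.posRoots \ Φ.posRootsOf I, γ) = ∑ γ ∈ Φ.posRoots \ Φ.posRootsOf I, γ := by
  rw [act_sum]
  apply sum_image_eq (act_injective L)
  intro γ hγ
  obtain ⟨h1, h2⟩ := Finset.mem_sdiff.mp hγ
  obtain ⟨h3, h4⟩ := Φ.act_P hI hL h1 h2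
  exact Finset.mem_sdiff.mpr ⟨h3, h4⟩

lemma act_fixes_weight {I : Finset V} (hI : I ⊆ Φ.simple) {ϖ : V → V}
    (hϖ : Φ.IsFundamentalWeights ϖ) {L : List V} (hL : ∀ α ∈ L, α ∈ I)
    {μ : V} (hμ : μ ∈ Φ.simple) (hμI : μ ∉ I) : act L (ϖ μ) = ϖ μ := by
  induction L with
  | nil => simp
  | cons α l ih =>
    have hαI : α ∈ l.cons α → α ∈ I := fun _ => hL α (List.mem_cons_self)
    have hrec := ih (fun γ hγ => hL γ (List.mem_cons_of_mem α hγ))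
    rw [act_cons, hrec, sref_apply]
    have : cpair (ϖ μ) α = 0 := by
      rw [hϖ μ hμ α (hI (hL α (List.mem_cons_self)))]
      have : μ ≠ α := fun h => hμI (h ▸ hL α (List.mem_cons_self))
      simp [this]
    rw [this]; simp

end RCRS

open RCRS

/-- For a proper subset `I ⊂ S` of the simple roots and every positive
root `β ∈ R⁺ \ R_I⁺`, one has `⟨2ρ^P − ρ − Σ_{α ∈ S\I} ϖ_α, β∨⟩ ≥ 0`. -/
theorem klt_flag_ineq {V : Type*} [NormedAddCommGroup V] [InnerProductSpace ℝ V] [DecidableEq V]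
    (Φ : RCRS V)
    (I : Finset V) (hI : I ⊂ Φ.simple)
    (ϖ : V → V) (hϖ : Φ.IsFundamentalWeights ϖ) :
    ∀ β ∈ Φ.posRoots \ Φ.posRootsOf I,
      0 ≤ cpair ((2 : ℝ) • Φ.rhoP I - Φ.rho - ∑ α ∈ Φ.simple \ I, ϖ α) β := by
  classical
  intro β hβ
  have hIs : I ⊆ Φ.simple := hI.subset
  obtain ⟨hβpos, hβnot⟩ := Finset.mem_sdiff.mp hβ
  -- get the word sending `R_I⁺` to negative roots
  obtain ⟨L, hL, hkill⟩ := Φ.exists_killing_word hIs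
    ((Φ.posRootsOf I).filter (fun δ => act [] δ ∈ Φ.posRoots)).card [] (by simp) rfl
  set W : V := ∑ α ∈ Φ.simple \ I, ϖ α with hW
  set T : V := (2 : ℝ) • Φ.rhoP I - Φ.rho - W with hT
  set Psum : V := ∑ γ ∈ Φ.posRoots \ Φ.posRootsOf I, γ with hPsum
  set Isum : V := ∑ δ ∈ Φ.posRootsOf I, δ with hIsum
  have hsplit : ∑ γ ∈ Φ.posRoots, γ = Psum + Isum :=
    (Finset.sum_sdiff (Φ.posRootsOf_subset I)).symm
  have hWfix : act L W = W := by
    rw [hW, act_sum]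
    refine Finset.sum_congr rfl (fun μ hμ => ?_)
    obtain ⟨h1, h2⟩ := Finset.mem_sdiff.mp hμ
    exact Φ.act_fixes_weight hIs hϖ hL h1 h2
  have hactT : act L T = Φ.rho - W := by
    rw [hT, act_sub, act_sub, act_smul, hWfix]
    rw [Φ.rhoP_eq, Φ.rho_eq, act_smul, act_smul, hsplit, act_add, Φ.act_fixes_Psum hIs hL,
      Φ.act_negates_Isum hIs hL hkill, ← hPsum, ← hIsum]
    module
  have hγ := Φ.act_P hIs hL hβpos hβnot
  set γ : V := act L β with hγdef
  have hγpos : γ ∈ Φ.posRoots := hγ.1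
  have hγr : γ ∈ Φ.roots := Φ.posRoots_subset hγpos
  -- transfer the pairing along the isometry
  have htrans : cpair T β = cpair (Φ.rho - W) γ := by
    rw [cpair, cpair, ← act_inner L T β, ← act_inner L β β, hactT, hγdef]
  rw [htrans]
  -- final computation
  obtain ⟨_, c, hc, hcsum⟩ := Φ.mem_posRoots.mp hγpos
  have hinner : (0:ℝ) ≤ ⟪Φ.rho - W, γ⟫ := by
    rw [hcsum, inner_sum]
    apply Finset.sum_nonneg
    intro μ hμ
    rw [real_inner_smul_right]
    have hμne : μ ≠ 0 := Φ.root_ne_zero (Φ.simple_subset hμ)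
    have hcp : (0:ℝ) ≤ cpair (Φ.rho - W) μ := by
      rw [cpair_sub_left, Φ.cpair_rho_simple hμ, hW, cpair_sum_left]
      have : ∑ ν ∈ Φ.simple \ I, cpair (ϖ ν) μ = if μ ∈ Φ.simple \ I then 1 else 0 := by
        rw [Finset.sum_congr rfl (fun ν hν =>
          hϖ ν (Finset.mem_sdiff.mp hν).1 μ hμ)]
        exact Finset.sum_ite_eq' (Φ.simple \ I) μ (fun _ => (1:ℝ))
      rw [this]
      split <;> norm_num
    have h0 : (0:ℝ) ≤ (c μ : ℝ) := by exact_mod_cast hc μ hμ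
    rw [inner_eq_cpair _ hμne]
    have hμμ : (0:ℝ) ≤ ⟪μ, μ⟫ := real_inner_self_nonneg
    positivity
  rw [cpair]
  have hγγ : (0:ℝ) < ⟪γ, γ⟫ :=
    lt_of_le_of_ne real_inner_self_nonneg
      (fun h0 => Φ.root_ne_zero hγr (inner_self_eq_zero.mp h0.symm))
  positivity
end

section
/- Let R be a reduced crystallographic root system with set of positive roots R⁺ and simple roots S, let I be a subset of S, and let (d_α)_{α ∈ S\I} be rational (or real) numbers with 0 ≤ d_α < 1 for all α. Then for every positive root β in R⁺ \ R_I⁺ one has the strict inequality ⟨2ρ^P − ρ − Σ_{α ∈ S\I} d_α ϖ_α , β∨⟩ > 0. -/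
/-!
Common setup: a reduced crystallographic root system realized in a real inner
product space, together with a chosen set of simple roots.  For a root `α`,
`cpair v α = ⟨v, α∨⟩ = 2⟪v,α⟫/⟪α,α⟫` is the pairing with the coroot `α∨`, and
`sref α` is the reflection in `α`.
-/

open scoped RealInnerProductSpace
open Finset

set_option linter.unusedSectionVars false

namespace KLTAux

open RCRS

variable {V : Type*} [NormedAddCommGroup V] [InnerProductSpace ℝ V]

section Basic

lemma inner_self_pos' {x : V} (h : x ≠ 0) : 0 < ⟪x, x⟫ :=
  lt_of_le_of_ne real_inner_self_nonneg (Ne.symm (inner_self_ne_zero.mpr h))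

lemma sref_apply (α v : V) : sref α v = v - (2 * ⟪v, α⟫ / ⟪α, α⟫) • α := rfl

lemma sref_add (α x y : V) : sref α (x + y) = sref α x + sref α y := by
  have h : 2 * (⟪x, α⟫ + ⟪y, α⟫) / ⟪α, α⟫
      = 2 * ⟪x, α⟫ / ⟪α, α⟫ + 2 * ⟪y, α⟫ / ⟪α, α⟫ := by ring
  simp only [sref, cpair, inner_add_left, h, add_smul]
  abel

lemma sref_smul (α : V) (c : ℝ) (x : V) : sref α (c • x) = c • sref α x := by
  have h : 2 * (c * ⟪x, α⟫) / ⟪α, α⟫ = c * (2 * ⟪x, α⟫ / ⟪α, α⟫) := by ring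
  simp only [sref, cpair, real_inner_smul_left, h, smul_sub, mul_smul]

lemma sref_zero (α : V) : sref α (0 : V) = 0 := by
  simp [sref, cpair]

lemma sref_neg (α x : V) : sref α (-x) = - sref α x := by
  have := sref_smul α (-1) x
  simpa using this

lemma sref_sub (α x y : V) : sref α (x - y) = sref α x - sref α y := by
  rw [sub_eq_add_neg, sref_add, sref_neg, sub_eq_add_neg]

lemma sref_sum (α : V) {ι : Type*} (s : Finset ι) (f : ι → V) :
    sref α (∑ i ∈ s, f i) = ∑ i ∈ s, sref α (f i) := by
  classical
  induction s using Finset.induction_on with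
  | empty => simp [sref_zero]
  | insert _ _ h ih => simp [Finset.sum_insert h, sref_add, ih]

lemma inner_sref_sref {α : V} (hα : ⟪α, α⟫ ≠ 0) (x y : V) :
    ⟪sref α x, sref α y⟫ = ⟪x, y⟫ := by
  simp only [sref, cpair, inner_sub_left, inner_sub_right, real_inner_smul_left,
    real_inner_smul_right]
  rw [real_inner_comm α y, real_inner_comm α x]
  field_simp
  ring

lemma sref_self {α : V} (hα : ⟪α, α⟫ ≠ 0) : sref α α = -α := by
  rw [sref_apply, mul_div_assoc, div_self hα, mul_one]
  module

lemma sref_sref {α : V} (hα : ⟪α, α⟫ ≠ 0) (x : V) : sref α (sref α x) = x := by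
  simp only [sref, cpair, inner_sub_left, real_inner_smul_left]
  rw [show (2 * (⟪x, α⟫ - 2 * ⟪x, α⟫ / ⟪α, α⟫ * ⟪α, α⟫) / ⟪α, α⟫) = - (2 * ⟪x, α⟫ / ⟪α, α⟫) by
    field_simp; ring]
  module

lemma sref_inj {α : V} (hα : ⟪α, α⟫ ≠ 0) : Function.Injective (sref α) :=
  Function.Involutive.injective (sref_sref hα)

end Basic

section Phi

variable [DecidableEq V] (Φ : RCRS V)

lemma root_ne_zero {β : V} (hβ : β ∈ Φ.roots) : β ≠ 0 :=
  fun h => Φ.zero_not_mem (h ▸ hβ)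

lemma root_inner_pos {β : V} (hβ : β ∈ Φ.roots) : 0 < ⟪β, β⟫ :=
  inner_self_pos' (root_ne_zero Φ hβ)

lemma root_inner_ne {β : V} (hβ : β ∈ Φ.roots) : ⟪β, β⟫ ≠ 0 :=
  ne_of_gt (root_inner_pos Φ hβ)

lemma simple_root {α : V} (hα : α ∈ Φ.simple) : α ∈ Φ.roots := Φ.simple_subset hα

lemma neg_root_mem {β : V} (hβ : β ∈ Φ.roots) : -β ∈ Φ.roots := by
  have h := Φ.reflect_mem β hβ β hβ
  rwa [show sref β β = -β from sref_self (root_inner_ne Φ hβ)] at h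

lemma mem_posRoots {β : V} :
    β ∈ Φ.posRoots ↔ β ∈ Φ.roots ∧ ∃ c : V → ℤ, (∀ α ∈ Φ.simple, 0 ≤ c α) ∧
      β = ∑ α ∈ Φ.simple, (c α : ℝ) • α := by
  classical
  simp [RCRS.posRoots, Finset.mem_filter]

lemma mem_posRootsOf {I : Finset V} {β : V} :
    β ∈ Φ.posRootsOf I ↔ β ∈ Φ.posRoots ∧ ∃ c : V → ℤ, β = ∑ α ∈ I, (c α : ℝ) • α := by
  classical
  simp [RCRS.posRootsOf, Finset.mem_filter]

lemma posRoots_subset : Φ.posRoots ⊆ Φ.roots := fun _ h => ((mem_posRoots Φ).mp h).1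

lemma posRootsOf_subset (I : Finset V) : Φ.posRootsOf I ⊆ Φ.posRoots :=
  fun _ h => ((mem_posRootsOf Φ).mp h).1

lemma root_pos_or_neg {β : V} (hβ : β ∈ Φ.roots) :
    β ∈ Φ.posRoots ∨ -β ∈ Φ.posRoots := by
  obtain ⟨c, hc, hrep⟩ := Φ.exists_coeffs β hβ
  rcases hc with hc | hc
  · exact Or.inl ((mem_posRoots Φ).mpr ⟨hβ, c, hc, hrep⟩)
  · right
    refine (mem_posRoots Φ).mpr ⟨neg_root_mem Φ hβ, fun α => -c α, fun α hα => by
      simpa using hc α hα, ?_⟩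
    rw [hrep, ← Finset.sum_neg_distrib]
    refine Finset.sum_congr rfl fun α _ => ?_
    push_cast
    module

end Phi

end KLTAux
namespace KLTAux

open RCRS

set_option linter.unusedSectionVars false

section FW

variable {V : Type*} [NormedAddCommGroup V] [InnerProductSpace ℝ V] [DecidableEq V]
variable {Φ : RCRS V} {ϖ : V → V}

lemma inner_fw (hϖ : Φ.IsFundamentalWeights ϖ) {γ α : V}
    (hγ : γ ∈ Φ.simple) (hα : α ∈ Φ.simple) :
    ⟪ϖ γ, α⟫ = if γ = α then ⟪α, α⟫ / 2 else 0 := by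
  have h := hϖ γ hγ α hα
  have hne : ⟪α, α⟫ ≠ 0 := root_inner_ne Φ (simple_root Φ hα)
  rw [cpair] at h
  by_cases he : γ = α
  · subst he
    rw [if_pos rfl] at h ⊢
    field_simp at h
    linarith
  · rw [if_neg he] at h ⊢
    field_simp at h
    linarith

lemma inner_fw_sum (hϖ : Φ.IsFundamentalWeights ϖ) {J : Finset V}
    (hJ : J ⊆ Φ.simple) (c : V → ℝ) {γ : V} (hγ : γ ∈ Φ.simple) :
    ⟪ϖ γ, ∑ α ∈ J, c α • α⟫ = if γ ∈ J then c γ * (⟪γ, γ⟫ / 2) else 0 := by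
  rw [inner_sum]
  rw [show (∑ α ∈ J, ⟪ϖ γ, c α • α⟫) = ∑ α ∈ J, if γ = α then c α * (⟪α, α⟫/2) else 0 from
    Finset.sum_congr rfl fun α hα => by
      rw [real_inner_smul_right, inner_fw hϖ hγ (hJ hα)]
      by_cases he : γ = α <;> simp [he]]
  rw [Finset.sum_ite_eq]

lemma posRoot_inner_fw_nonneg (hϖ : Φ.IsFundamentalWeights ϖ) {β γ : V}
    (hβ : β ∈ Φ.posRoots) (hγ : γ ∈ Φ.simple) :
    0 ≤ ⟪ϖ γ, β⟫ := by
  obtain ⟨hroot, c, hc, hrep⟩ := (mem_posRoots Φ).mp hβ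
  rw [hrep, inner_fw_sum hϖ (le_refl _) _ hγ]
  rw [if_pos hγ]
  have := hc γ hγ
  have h2 := root_inner_pos Φ (simple_root Φ hγ)
  positivity

lemma posRoot_coeff (hϖ : Φ.IsFundamentalWeights ϖ) {β γ : V} {c : V → ℤ}
    (hγ : γ ∈ Φ.simple) (hrep : β = ∑ α ∈ Φ.simple, (c α : ℝ) • α) :
    ⟪ϖ γ, β⟫ = (c γ : ℝ) * (⟪γ, γ⟫ / 2) := by
  rw [hrep, inner_fw_sum hϖ (le_refl _) _ hγ, if_pos hγ]

lemma posRoot_phi_pos (hϖ : Φ.IsFundamentalWeights ϖ) {β : V} (hβ : β ∈ Φ.posRoots) :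
    0 < ⟪∑ γ ∈ Φ.simple, ϖ γ, β⟫ := by
  obtain ⟨hroot, c, hc, hrep⟩ := (mem_posRoots Φ).mp hβ
  rw [sum_inner]
  have hterm : ∀ γ ∈ Φ.simple, ⟪ϖ γ, β⟫ = (c γ : ℝ) * (⟪γ, γ⟫ / 2) :=
    fun γ hγ => posRoot_coeff hϖ hγ hrep
  have hnn : ∀ γ ∈ Φ.simple, 0 ≤ ⟪ϖ γ, β⟫ := fun γ hγ =>
    posRoot_inner_fw_nonneg hϖ hβ hγ
  by_contra hle
  push_neg at hle
  have hzero : ∑ γ ∈ Φ.simple, ⟪ϖ γ, β⟫ = 0 :=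
    le_antisymm hle (Finset.sum_nonneg hnn)
  have hall := (Finset.sum_eq_zero_iff_of_nonneg hnn).mp hzero
  have hc0 : ∀ γ ∈ Φ.simple, (c γ : ℝ) = 0 := by
    intro γ hγ
    have h1 := hall γ hγ
    rw [hterm γ hγ] at h1
    have h2 := root_inner_pos Φ (simple_root Φ hγ)
    rcases mul_eq_zero.mp h1 with h | h
    · exact h
    · exfalso; rw [div_eq_zero_iff] at h; rcases h with h | h <;> linarith
  have : β = 0 := by
    rw [hrep]
    exact Finset.sum_eq_zero fun γ hγ => by rw [hc0 γ hγ, zero_smul]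
  exact root_ne_zero Φ (posRoots_subset Φ hβ) this

lemma posRoot_neg_not_mem (hϖ : Φ.IsFundamentalWeights ϖ) {β : V}
    (hβ : β ∈ Φ.posRoots) : -β ∉ Φ.posRoots := by
  intro h
  have h1 := posRoot_phi_pos hϖ hβ
  have h2 := posRoot_phi_pos hϖ h
  rw [inner_neg_right] at h2
  linarith

lemma posRootsOf_inner_fw_zero (hϖ : Φ.IsFundamentalWeights ϖ) {I : Finset V}
    (hI : I ⊆ Φ.simple) {β γ : V}
    (hβ : β ∈ Φ.posRootsOf I) (hγ : γ ∈ Φ.simple) (hγI : γ ∉ I) :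
    ⟪ϖ γ, β⟫ = 0 := by
  obtain ⟨hpos, c, hrep⟩ := (mem_posRootsOf Φ).mp hβ
  rw [hrep, inner_fw_sum hϖ hI _ hγ, if_neg hγI]

lemma mem_posRootsOf_of_vanishing (hϖ : Φ.IsFundamentalWeights ϖ) {I : Finset V}
    (hI : I ⊆ Φ.simple) {β : V}
    (hβ : β ∈ Φ.posRoots) (hvan : ∀ γ ∈ Φ.simple, γ ∉ I → ⟪ϖ γ, β⟫ = 0) :
    β ∈ Φ.posRootsOf I := by
  obtain ⟨hroot, c, hc, hrep⟩ := (mem_posRoots Φ).mp hβ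
  refine (mem_posRootsOf Φ).mpr ⟨hβ, c, ?_⟩
  rw [hrep]
  refine (Finset.sum_subset hI ?_).symm
  intro γ hγ hγI
  have h0 := hvan γ hγ hγI
  rw [posRoot_coeff hϖ hγ hrep] at h0
  have h2 := root_inner_pos Φ (simple_root Φ hγ)
  have : (c γ : ℝ) = 0 := by
    rcases mul_eq_zero.mp h0 with h | h
    · exact h
    · exfalso; rw [div_eq_zero_iff] at h; rcases h with h | h <;> linarith
  rw [this, zero_smul]

end FW

end KLTAux
namespace KLTAux

open RCRS

set_option linter.unusedSectionVars false

section L1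

variable {V : Type*} [NormedAddCommGroup V] [InnerProductSpace ℝ V] [DecidableEq V]
variable {Φ : RCRS V} {ϖ : V → V}

lemma inner_sref_left (α β x : V) :
    ⟪x, sref α β⟫ = ⟪x, β⟫ - (2 * ⟪β, α⟫ / ⟪α, α⟫) * ⟪x, α⟫ := by
  simp [sref, cpair, inner_sub_right, real_inner_smul_right]

lemma inner_sref_root {α : V} (hα : ⟪α, α⟫ ≠ 0) (β : V) :
    ⟪sref α β, α⟫ = - ⟪β, α⟫ := by
  simp only [sref, cpair, inner_sub_left, real_inner_smul_left]
  field_simp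
  ring

lemma simple_mem_posRoots (Φ : RCRS V) {α : V} (hα : α ∈ Φ.simple) :
    α ∈ Φ.posRoots := by
  refine (mem_posRoots Φ).mpr ⟨simple_root Φ hα, fun γ => if γ = α then 1 else 0,
    fun γ _ => by dsimp only; split_ifs <;> simp, ?_⟩
  rw [show (∑ γ ∈ Φ.simple, ((if γ = α then (1:ℤ) else 0 : ℤ) : ℝ) • γ)
      = ∑ γ ∈ Φ.simple, (if γ = α then γ else 0) from
    Finset.sum_congr rfl fun γ _ => by split_ifs <;> simp]
  rw [Finset.sum_ite_eq' Φ.simple α (fun x => x), if_pos hα]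

lemma sref_simple_posRoot (hϖ : Φ.IsFundamentalWeights ϖ) {α β : V}
    (hα : α ∈ Φ.simple) (hβ : β ∈ Φ.posRoots) (hne : β ≠ α) :
    sref α β ∈ Φ.posRoots ∧ sref α β ≠ α := by
  have hαr : α ∈ Φ.roots := simple_root Φ hα
  have hβr : β ∈ Φ.roots := posRoots_subset Φ hβ
  have hδr : sref α β ∈ Φ.roots := Φ.reflect_mem α hαr β hβr
  obtain ⟨hroot, c, hc, hrep⟩ := (mem_posRoots Φ).mp hβ
  -- find a simple root γ₀ ≠ α with positive coefficient
  have hex : ∃ γ₀ ∈ Φ.simple, γ₀ ≠ α ∧ 0 < (c γ₀ : ℝ) := by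
    by_contra h
    push_neg at h
    have hz : ∀ γ ∈ Φ.simple, γ ≠ α → (c γ : ℝ) = 0 := by
      intro γ hγ hγα
      have h1 := h γ hγ hγα
      have h2 : (0:ℝ) ≤ (c γ : ℝ) := by exact_mod_cast hc γ hγ
      linarith
    have hβα : β = (c α : ℝ) • α := by
      rw [hrep]
      exact Finset.sum_eq_single_of_mem α hα fun γ hγ hγα => by
        rw [hz γ hγ hγα, zero_smul]
    have hmem : (c α : ℝ) • α ∈ Φ.roots := hβα ▸ hβr
    rcases Φ.reduced α hαr _ hmem with h1 | h1
    · exact hne (by rw [hβα, h1, one_smul])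
    · have : β = -α := by rw [hβα, h1]; module
      have hαpos := simple_mem_posRoots Φ hα
      exact posRoot_neg_not_mem hϖ hαpos (this ▸ hβ)
  obtain ⟨γ₀, hγ₀, hγ₀α, hγ₀pos⟩ := hex
  have hfwα : ⟪ϖ γ₀, α⟫ = 0 := by
    rw [inner_fw hϖ hγ₀ hα, if_neg hγ₀α]
  have hfwβ : ⟪ϖ γ₀, β⟫ = (c γ₀ : ℝ) * (⟪γ₀, γ₀⟫ / 2) :=
    posRoot_coeff hϖ hγ₀ hrep
  have hfwδ : 0 < ⟪ϖ γ₀, sref α β⟫ := by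
    rw [inner_sref_left, hfwα, hfwβ]
    have := root_inner_pos Φ (simple_root Φ hγ₀)
    have : 0 < (c γ₀ : ℝ) * (⟪γ₀, γ₀⟫ / 2) := by positivity
    linarith
  have hδpos : sref α β ∈ Φ.posRoots := by
    rcases root_pos_or_neg Φ hδr with h | h
    · exact h
    · exfalso
      have := posRoot_inner_fw_nonneg hϖ h hγ₀
      rw [inner_neg_right] at this
      linarith
  refine ⟨hδpos, fun h => ?_⟩
  rw [h, hfwα] at hfwδ
  exact lt_irrefl _ hfwδ

lemma inner_rho_simple (hϖ : Φ.IsFundamentalWeights ϖ) {α : V} (hα : α ∈ Φ.simple) :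
    ⟪Φ.rho, α⟫ = ⟪α, α⟫ / 2 := by
  have hαr : α ∈ Φ.roots := simple_root Φ hα
  have hA : ⟪α, α⟫ ≠ 0 := root_inner_ne Φ hαr
  have hαP : α ∈ Φ.posRoots := simple_mem_posRoots Φ hα
  set E := Φ.posRoots.erase α with hE
  have hmap : ∀ β ∈ E, sref α β ∈ E := by
    intro β hβ
    have h1 := sref_simple_posRoot hϖ hα (Finset.mem_of_mem_erase hβ)
      (Finset.ne_of_mem_erase hβ)
    exact Finset.mem_erase.mpr ⟨h1.2, h1.1⟩
  have hinv : ∀ β ∈ E, sref α (sref α β) = β := fun β _ => sref_sref hA β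
  have hs : ∑ β ∈ E, ⟪sref α β, α⟫ = ∑ β ∈ E, ⟪β, α⟫ :=
    Finset.sum_nbij' (sref α) (sref α) hmap hmap hinv hinv (fun β _ => rfl)
  have hneg : ∑ β ∈ E, ⟪sref α β, α⟫ = - ∑ β ∈ E, ⟪β, α⟫ := by
    rw [← Finset.sum_neg_distrib]
    exact Finset.sum_congr rfl fun β _ => inner_sref_root hA β
  have hzero : ∑ β ∈ E, ⟪β, α⟫ = 0 := by
    rw [hneg] at hs; linarith
  have hsum : ∑ β ∈ Φ.posRoots, ⟪β, α⟫ = ⟪α, α⟫ := by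
    rw [← Finset.add_sum_erase _ _ hαP, ← hE, hzero, add_zero]
  rw [RCRS.rho, real_inner_smul_left, sum_inner, hsum]
  ring

lemma simple_mem_posRootsOf (hϖ : Φ.IsFundamentalWeights ϖ) {I : Finset V}
    (hI : I ⊆ Φ.simple) {α : V} (hα : α ∈ I) : α ∈ Φ.posRootsOf I :=
  mem_posRootsOf_of_vanishing hϖ hI (simple_mem_posRoots Φ (hI hα))
    (fun γ hγ hγI => by
      rw [inner_fw hϖ hγ (hI hα), if_neg (fun h => hγI (by rw [h]; exact hα))])

lemma sref_mem_posRootsOf (hϖ : Φ.IsFundamentalWeights ϖ) {I : Finset V}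
    (hI : I ⊆ Φ.simple) {α β : V} (hα : α ∈ I) (hβ : β ∈ Φ.posRootsOf I)
    (hne : β ≠ α) :
    sref α β ∈ Φ.posRootsOf I ∧ sref α β ≠ α := by
  have h1 := sref_simple_posRoot hϖ (hI hα) (posRootsOf_subset Φ I hβ) hne
  refine ⟨mem_posRootsOf_of_vanishing hϖ hI h1.1 (fun γ hγ hγI => ?_), h1.2⟩
  rw [inner_sref_left, posRootsOf_inner_fw_zero hϖ hI hβ hγ hγI,
    inner_fw hϖ hγ (hI hα), if_neg (fun h => hγI (by rw [h]; exact hα))]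
  ring

lemma sref_mem_sdiff (hϖ : Φ.IsFundamentalWeights ϖ) {I : Finset V}
    (hI : I ⊆ Φ.simple) {α β : V} (hα : α ∈ I)
    (hβ : β ∈ Φ.posRoots \ Φ.posRootsOf I) :
    sref α β ∈ Φ.posRoots \ Φ.posRootsOf I := by
  rw [Finset.mem_sdiff] at hβ ⊢
  obtain ⟨hβP, hβT⟩ := hβ
  have hne : β ≠ α := fun h => hβT (h ▸ simple_mem_posRootsOf hϖ hI hα)
  have h1 := sref_simple_posRoot hϖ (hI hα) hβP hne
  refine ⟨h1.1, fun hmem => hβT ?_⟩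
  refine mem_posRootsOf_of_vanishing hϖ hI hβP (fun γ hγ hγI => ?_)
  have h2 := posRootsOf_inner_fw_zero hϖ hI hmem hγ hγI
  rw [inner_sref_left, inner_fw hϖ hγ (hI hα), if_neg (fun h => hγI (by rw [h]; exact hα))] at h2
  linarith [h2]

end L1

end KLTAux
namespace KLTAux

open RCRS

set_option linter.unusedSectionVars false

section WP

variable {V : Type*} [NormedAddCommGroup V] [InnerProductSpace ℝ V] [DecidableEq V]
variable {Φ : RCRS V} {ϖ : V → V}

lemma wordProd_nil (v : V) : RCRS.wordProd [] v = v := rfl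

lemma wordProd_cons (a : V) (l : List V) (v : V) :
    RCRS.wordProd (a :: l) v = sref a (RCRS.wordProd l v) := rfl

lemma wordProd_append (l₁ l₂ : List V) (v : V) :
    RCRS.wordProd (l₁ ++ l₂) v = RCRS.wordProd l₁ (RCRS.wordProd l₂ v) := by
  induction l₁ with
  | nil => rfl
  | cons a l ih => simp only [List.cons_append, wordProd_cons, ih]

lemma wp_add (l : List V) (x y : V) :
    RCRS.wordProd l (x + y) = RCRS.wordProd l x + RCRS.wordProd l y := by
  induction l with
  | nil => rfl
  | cons a l ih => simp only [wordProd_cons, ih, sref_add]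

lemma wp_smul (l : List V) (c : ℝ) (x : V) :
    RCRS.wordProd l (c • x) = c • RCRS.wordProd l x := by
  induction l with
  | nil => rfl
  | cons a l ih => simp only [wordProd_cons, ih, sref_smul]

lemma wp_zero (l : List V) : RCRS.wordProd l (0 : V) = 0 := by
  induction l with
  | nil => rfl
  | cons a l ih => simp only [wordProd_cons, ih, sref_zero]

lemma wp_neg (l : List V) (x : V) : RCRS.wordProd l (-x) = - RCRS.wordProd l x := by
  have := wp_smul l (-1) x
  simpa using this

lemma wp_sub (l : List V) (x y : V) :
    RCRS.wordProd l (x - y) = RCRS.wordProd l x - RCRS.wordProd l y := by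
  rw [sub_eq_add_neg, wp_add, wp_neg, sub_eq_add_neg]

lemma wp_sum (l : List V) {ι : Type*} (s : Finset ι) (f : ι → V) :
    RCRS.wordProd l (∑ i ∈ s, f i) = ∑ i ∈ s, RCRS.wordProd l (f i) := by
  classical
  induction s using Finset.induction_on with
  | empty => simp [wp_zero]
  | insert _ _ h ih => simp [Finset.sum_insert h, wp_add, ih]

lemma wp_inner (Φ : RCRS V) {l : List V} (hl : ∀ a ∈ l, a ∈ Φ.roots) (x y : V) :
    ⟪RCRS.wordProd l x, RCRS.wordProd l y⟫ = ⟪x, y⟫ := by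
  induction l with
  | nil => rfl
  | cons a l ih =>
    have ha : a ∈ Φ.roots := hl a (List.mem_cons_self)
    have := ih (fun b hb => hl b (List.mem_cons_of_mem a hb))
    rw [wordProd_cons, wordProd_cons, inner_sref_sref (root_inner_ne Φ ha), this]

lemma wp_reverse_cancel (Φ : RCRS V) {l : List V} (hl : ∀ a ∈ l, a ∈ Φ.roots) (v : V) :
    RCRS.wordProd l (RCRS.wordProd l.reverse v) = v := by
  induction l generalizing v with
  | nil => rfl
  | cons a l ih =>
    have ha : a ∈ Φ.roots := hl a (List.mem_cons_self)
    have hl' : ∀ b ∈ l, b ∈ Φ.roots := fun b hb => hl b (List.mem_cons_of_mem a hb)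
    rw [List.reverse_cons, wordProd_append, wordProd_cons]
    show sref a (RCRS.wordProd l (RCRS.wordProd l.reverse (RCRS.wordProd [a] v))) = v
    rw [wordProd_cons, wordProd_nil, ih hl', sref_sref (root_inner_ne Φ ha)]

lemma wp_reverse_cancel' (Φ : RCRS V) {l : List V} (hl : ∀ a ∈ l, a ∈ Φ.roots) (v : V) :
    RCRS.wordProd l.reverse (RCRS.wordProd l v) = v := by
  have hl' : ∀ a ∈ l.reverse, a ∈ Φ.roots := fun a ha => hl a (List.mem_reverse.mp ha)
  have := wp_reverse_cancel Φ (l := l.reverse) hl' v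
  rwa [List.reverse_reverse] at this

lemma wp_inj (Φ : RCRS V) {l : List V} (hl : ∀ a ∈ l, a ∈ Φ.roots) {x y : V}
    (h : RCRS.wordProd l x = RCRS.wordProd l y) : x = y := by
  have h1 := wp_reverse_cancel' Φ hl x
  have h2 := wp_reverse_cancel' Φ hl y
  rw [← h1, ← h2, h]

lemma wp_root (Φ : RCRS V) {l : List V} (hl : ∀ a ∈ l, a ∈ Φ.roots) {β : V}
    (hβ : β ∈ Φ.roots) : RCRS.wordProd l β ∈ Φ.roots := by
  induction l with
  | nil => exact hβ
  | cons a l ih =>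
    exact Φ.reflect_mem a (hl a (List.mem_cons_self)) _
      (ih (fun b hb => hl b (List.mem_cons_of_mem a hb)))

lemma wp_sdiff (hϖ : Φ.IsFundamentalWeights ϖ) {I : Finset V} (hI : I ⊆ Φ.simple)
    {l : List V} (hl : ∀ a ∈ l, a ∈ I) {β : V}
    (hβ : β ∈ Φ.posRoots \ Φ.posRootsOf I) :
    RCRS.wordProd l β ∈ Φ.posRoots \ Φ.posRootsOf I := by
  induction l with
  | nil => exact hβ
  | cons a l ih =>
    rw [wordProd_cons]
    exact sref_mem_sdiff hϖ hI (hl a (List.mem_cons_self))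
      (ih (fun b hb => hl b (List.mem_cons_of_mem a hb)))

lemma wp_T_pm (hϖ : Φ.IsFundamentalWeights ϖ) {I : Finset V} (hI : I ⊆ Φ.simple)
    {l : List V} (hl : ∀ a ∈ l, a ∈ I) {β : V}
    (hβ : β ∈ Φ.posRootsOf I) :
    RCRS.wordProd l β ∈ Φ.posRootsOf I ∨ - RCRS.wordProd l β ∈ Φ.posRootsOf I := by
  have key : ∀ a ∈ I, ∀ x : V, (x ∈ Φ.posRootsOf I ∨ -x ∈ Φ.posRootsOf I) →
      (sref a x ∈ Φ.posRootsOf I ∨ -(sref a x) ∈ Φ.posRootsOf I) := by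
    intro a ha x hx
    have hA : ⟪a, a⟫ ≠ 0 := root_inner_ne Φ (simple_root Φ (hI ha))
    have base : ∀ y : V, y ∈ Φ.posRootsOf I →
        (sref a y ∈ Φ.posRootsOf I ∨ -(sref a y) ∈ Φ.posRootsOf I) := by
      intro y hy
      by_cases hya : y = a
      · right
        rw [hya, sref_self hA, neg_neg]
        exact simple_mem_posRootsOf hϖ hI ha
      · exact Or.inl (sref_mem_posRootsOf hϖ hI ha hy hya).1
    rcases hx with hx | hx
    · exact base x hx
    · rcases base (-x) hx with h | h
      · right; rwa [sref_neg] at h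
      · left; rwa [sref_neg, neg_neg] at h
  induction l with
  | nil => exact Or.inl hβ
  | cons a l ih =>
    rw [wordProd_cons]
    exact key a (hl a (List.mem_cons_self)) _
      (ih (fun b hb => hl b (List.mem_cons_of_mem a hb)))

lemma wp_fw_fix (hϖ : Φ.IsFundamentalWeights ϖ) {I : Finset V} (hI : I ⊆ Φ.simple)
    {l : List V} (hl : ∀ a ∈ l, a ∈ I) {γ : V} (hγ : γ ∈ Φ.simple) (hγI : γ ∉ I) :
    RCRS.wordProd l (ϖ γ) = ϖ γ := by
  induction l with
  | nil => rfl
  | cons a l ih =>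
    have ha : a ∈ I := hl a (List.mem_cons_self)
    rw [wordProd_cons, ih (fun b hb => hl b (List.mem_cons_of_mem a hb))]
    rw [sref_apply, inner_fw hϖ hγ (hI ha), if_neg (fun h => hγI (by rw [h]; exact ha))]
    simp

end WP

end KLTAux
namespace KLTAux

open RCRS

set_option linter.unusedSectionVars false
set_option maxHeartbeats 1000000

section Longest

variable {V : Type*} [NormedAddCommGroup V] [InnerProductSpace ℝ V] [DecidableEq V]
variable {Φ : RCRS V} {ϖ : V → V}

lemma exists_w (hϖ : Φ.IsFundamentalWeights ϖ) {I : Finset V} (hI : I ⊆ Φ.simple) :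
    ∃ l : List V, (∀ a ∈ l, a ∈ I) ∧
      ∀ β ∈ Φ.posRootsOf I, -(RCRS.wordProd l β) ∈ Φ.posRootsOf I := by
  classical
  set T := Φ.posRootsOf I with hT
  set Nf : List V → ℕ := fun l => (T.filter fun β => -(RCRS.wordProd l β) ∈ T).card
    with hNf
  -- the key counting step
  have step : ∀ l : List V, (∀ a ∈ l, a ∈ I) → ∀ α ∈ I,
      RCRS.wordProd l α ∈ T → Nf (l ++ [α]) = Nf l + 1 := by
    intro l hl α hα hwα
    have hαS : α ∈ Φ.simple := hI hα
    have hA : ⟪α, α⟫ ≠ 0 := root_inner_ne Φ (simple_root Φ hαS)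
    have hαT : α ∈ T := simple_mem_posRootsOf hϖ hI hα
    have hkey : ∀ β : V, RCRS.wordProd (l ++ [α]) β = RCRS.wordProd l (sref α β) :=
      fun β => by rw [wordProd_append]; rfl
    set F := T.filter (fun β => -(RCRS.wordProd l (sref α β)) ∈ T) with hF
    set G := T.filter (fun β => -(RCRS.wordProd l β) ∈ T) with hG
    have hNF : Nf (l ++ [α]) = F.card := by
      have heq : (fun β => -RCRS.wordProd (l ++ [α]) β ∈ T)
          = (fun β => -RCRS.wordProd l (sref α β) ∈ T) := by
        funext β; rw [hkey β]
      simp only [hNf, heq]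
      rfl
    have hαF : α ∈ F := by
      rw [hF, Finset.mem_filter]
      refine ⟨hαT, ?_⟩
      rw [sref_self hA, wp_neg, neg_neg]
      exact hwα
    have hαG : α ∉ G := by
      rw [hG, Finset.mem_filter]
      rintro ⟨-, h⟩
      exact posRoot_neg_not_mem hϖ (posRootsOf_subset Φ I hwα)
        (posRootsOf_subset Φ I h)
    have himg : F.erase α = (G.erase α).image (sref α) := by
      ext x
      constructor
      · intro hx
        rw [Finset.mem_erase, hF, Finset.mem_filter] at hx
        obtain ⟨hxα, hxT, hxw⟩ := hx
        have hy := sref_mem_posRootsOf hϖ hI hα hxT hxα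
        refine Finset.mem_image.mpr ⟨sref α x, ?_, sref_sref hA x⟩
        rw [Finset.mem_erase, hG, Finset.mem_filter]
        exact ⟨hy.2, hy.1, hxw⟩
      · intro hx
        obtain ⟨y, hy, hxy⟩ := Finset.mem_image.mp hx
        rw [Finset.mem_erase, hG, Finset.mem_filter] at hy
        obtain ⟨hyα, hyT, hyw⟩ := hy
        have hx2 := sref_mem_posRootsOf hϖ hI hα hyT hyα
        rw [Finset.mem_erase, hF, Finset.mem_filter, ← hxy]
        exact ⟨hx2.2, hx2.1, by rw [sref_sref hA y]; exact hyw⟩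
    have hcard : F.card = G.card + 1 := by
      rw [← Finset.card_erase_add_one hαF, himg,
        Finset.card_image_of_injOn (Function.Injective.injOn (sref_inj hA)),
        Finset.erase_eq_of_notMem hαG]
    rw [hNF, hcard]
  -- the set of achievable counts
  set vals : Set ℕ := {n | ∃ l : List V, (∀ a ∈ l, a ∈ I) ∧ Nf l = n} with hvals
  have hne : vals.Nonempty := ⟨Nf [], [], by simp, rfl⟩
  have hbdd : BddAbove vals := by
    refine ⟨T.card, ?_⟩
    rintro n ⟨l, -, rfl⟩
    exact Finset.card_filter_le _ _
  obtain ⟨l, hl, hNl⟩ := Nat.sSup_mem hne hbdd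
  refine ⟨l, hl, ?_⟩
  intro β hβ
  by_contra hcon
  have hwβT : RCRS.wordProd l β ∈ T :=
    (wp_T_pm hϖ hI hl hβ).resolve_right hcon
  have hexα : ∃ α ∈ I, RCRS.wordProd l α ∈ T := by
    by_contra h2
    push_neg at h2
    have hneg : ∀ α ∈ I, -(RCRS.wordProd l α) ∈ T := fun α hα =>
      (wp_T_pm hϖ hI hl (simple_mem_posRootsOf hϖ hI hα)).resolve_left (h2 α hα)
    obtain ⟨hβP, c, hrep⟩ := (mem_posRootsOf Φ).mp hβ
    have hcnn : ∀ α ∈ I, 0 ≤ (c α : ℝ) := by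
      intro α hα
      have h3 := posRoot_inner_fw_nonneg hϖ hβP (hI hα)
      rw [hrep, inner_fw_sum hϖ hI _ (hI hα), if_pos hα] at h3
      nlinarith [root_inner_pos Φ (simple_root Φ (hI hα))]
    have hφ : 0 < ⟪∑ γ ∈ Φ.simple, ϖ γ, RCRS.wordProd l β⟫ :=
      posRoot_phi_pos hϖ (posRootsOf_subset Φ I hwβT)
    have hwrep : RCRS.wordProd l β = ∑ α ∈ I, (c α : ℝ) • RCRS.wordProd l α := by
      rw [hrep, wp_sum]
      exact Finset.sum_congr rfl fun α _ => wp_smul l _ α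
    have hsum : ⟪∑ γ ∈ Φ.simple, ϖ γ, RCRS.wordProd l β⟫
        = ∑ α ∈ I, (c α : ℝ) * ⟪∑ γ ∈ Φ.simple, ϖ γ, RCRS.wordProd l α⟫ := by
      rw [hwrep, inner_sum]
      exact Finset.sum_congr rfl fun α _ => real_inner_smul_right _ _ _
    have hle : ∀ α ∈ I, (c α : ℝ) * ⟪∑ γ ∈ Φ.simple, ϖ γ, RCRS.wordProd l α⟫ ≤ 0 := by
      intro α hα
      have h4 := posRoot_phi_pos hϖ (posRootsOf_subset Φ I (hneg α hα))
      rw [inner_neg_right] at h4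
      have h5 : ⟪∑ γ ∈ Φ.simple, ϖ γ, RCRS.wordProd l α⟫ ≤ 0 := by linarith
      exact mul_nonpos_of_nonneg_of_nonpos (hcnn α hα) h5
    have : ⟪∑ γ ∈ Φ.simple, ϖ γ, RCRS.wordProd l β⟫ ≤ 0 := by
      rw [hsum]
      exact Finset.sum_nonpos hle
    linarith
  obtain ⟨α, hα, hwα⟩ := hexα
  have hstep := step l hl α hα hwα
  have hmem : Nf l + 1 ∈ vals := by
    refine ⟨l ++ [α], ?_, hstep⟩
    intro a ha
    rcases List.mem_append.mp ha with h | h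
    · exact hl a h
    · rw [List.mem_singleton.mp h]; exact hα
  have : Nf l + 1 ≤ sSup vals := le_csSup hbdd hmem
  rw [hNl] at this
  omega

end Longest

end KLTAux
namespace KLTAux

open RCRS

set_option linter.unusedSectionVars false
set_option maxHeartbeats 1000000

section Final

variable {V : Type*} [NormedAddCommGroup V] [InnerProductSpace ℝ V] [DecidableEq V]
variable {Φ : RCRS V} {ϖ : V → V}

lemma wp_sigma_fix (hϖ : Φ.IsFundamentalWeights ϖ) {I : Finset V} (hI : I ⊆ Φ.simple)
    {l : List V} (hl : ∀ a ∈ l, a ∈ I) :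
    RCRS.wordProd l (∑ β ∈ Φ.posRoots \ Φ.posRootsOf I, β)
      = ∑ β ∈ Φ.posRoots \ Φ.posRootsOf I, β := by
  classical
  set s := Φ.posRoots \ Φ.posRootsOf I with hs
  have hroots : ∀ a ∈ l, a ∈ Φ.roots := fun a ha => simple_root Φ (hI (hl a ha))
  have hmap : ∀ β ∈ s, RCRS.wordProd l β ∈ s := fun β hβ => wp_sdiff hϖ hI hl hβ
  have hinj : ∀ x ∈ s, ∀ y ∈ s, RCRS.wordProd l x = RCRS.wordProd l y → x = y :=
    fun x _ y _ h => wp_inj Φ hroots h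
  have himg : s.image (RCRS.wordProd l) = s := by
    apply Finset.eq_of_subset_of_card_le
    · intro x hx
      obtain ⟨y, hy, rfl⟩ := Finset.mem_image.mp hx
      exact hmap y hy
    · rw [Finset.card_image_of_injOn hinj]
  rw [wp_sum]
  conv_rhs => rw [← himg]
  rw [Finset.sum_image hinj]

lemma wp_tau_neg (hϖ : Φ.IsFundamentalWeights ϖ) {I : Finset V} (hI : I ⊆ Φ.simple)
    {l : List V} (hl : ∀ a ∈ l, a ∈ I)
    (hlong : ∀ β ∈ Φ.posRootsOf I, -(RCRS.wordProd l β) ∈ Φ.posRootsOf I) :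
    RCRS.wordProd l (∑ β ∈ Φ.posRootsOf I, β) = - ∑ β ∈ Φ.posRootsOf I, β := by
  classical
  set T := Φ.posRootsOf I with hT
  have hroots : ∀ a ∈ l, a ∈ Φ.roots := fun a ha => simple_root Φ (hI (hl a ha))
  have hinj : ∀ x ∈ T, ∀ y ∈ T, -(RCRS.wordProd l x) = -(RCRS.wordProd l y) → x = y :=
    fun x _ y _ h => wp_inj Φ hroots (neg_injective h)
  have himg : T.image (fun β => -(RCRS.wordProd l β)) = T := by
    apply Finset.eq_of_subset_of_card_le
    · intro x hx
      obtain ⟨y, hy, rfl⟩ := Finset.mem_image.mp hx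
      exact hlong y hy
    · rw [Finset.card_image_of_injOn hinj]
  have h1 : ∑ β ∈ T, β = ∑ β ∈ T, -(RCRS.wordProd l β) := by
    conv_lhs => rw [← himg]
    rw [Finset.sum_image hinj]
  rw [wp_sum, ← neg_eq_iff_eq_neg, ← Finset.sum_neg_distrib, ← h1]

lemma inner_u_nonneg (hϖ : Φ.IsFundamentalWeights ϖ) {I : Finset V} (hI : I ⊆ Φ.simple)
    {δ : V} (hδ : δ ∈ Φ.posRoots) :
    0 ≤ ⟪Φ.rho - ∑ γ ∈ Φ.simple \ I, ϖ γ, δ⟫ := by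
  obtain ⟨hroot, c, hc, hrep⟩ := (mem_posRoots Φ).mp hδ
  have hterm : ∀ γ ∈ Φ.simple, 0 ≤ ⟪Φ.rho - ∑ α ∈ Φ.simple \ I, ϖ α, γ⟫ := by
    intro γ hγ
    rw [inner_sub_left, inner_rho_simple hϖ hγ, sum_inner]
    have h2 : ∑ α ∈ Φ.simple \ I, ⟪ϖ α, γ⟫
        = if γ ∈ Φ.simple \ I then ⟪γ, γ⟫ / 2 else 0 := by
      rw [show (∑ α ∈ Φ.simple \ I, ⟪ϖ α, γ⟫)
          = ∑ α ∈ Φ.simple \ I, if α = γ then ⟪γ, γ⟫ / 2 else 0 from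
        Finset.sum_congr rfl fun α hα => by
          rw [inner_fw hϖ (Finset.mem_sdiff.mp hα).1 hγ]]
      rw [Finset.sum_ite_eq' _ γ (fun _ => ⟪γ, γ⟫ / 2)]
    rw [h2]
    split_ifs with h
    · simp
    · have := root_inner_pos Φ (simple_root Φ hγ)
      linarith
  rw [hrep, inner_sum]
  refine Finset.sum_nonneg fun γ hγ => ?_
  rw [real_inner_smul_right]
  have h3 : (0:ℝ) ≤ (c γ : ℝ) := by exact_mod_cast hc γ hγ
  exact mul_nonneg h3 (hterm γ hγ)

end Final

end KLTAux
lemma KLTAux.cpair_eq {V : Type*} [NormedAddCommGroup V] [InnerProductSpace ℝ V]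
    (v α : V) : cpair v α = 2 * ⟪v, α⟫ / ⟪α, α⟫ := rfl

/-- For a subset `I ⊆ S`, real numbers `0 ≤ d_α < 1` (`α ∈ S\I`), and
every positive root `β ∈ R⁺ \ R_I⁺`, one has the strict inequality
`⟨2ρ^P − ρ − Σ_{α ∈ S\I} d_α ϖ_α, β∨⟩ > 0`. -/
theorem klt_flag_strict_ineq {V : Type*} [NormedAddCommGroup V] [InnerProductSpace ℝ V] [DecidableEq V]
    (Φ : RCRS V)
    (I : Finset V) (hI : I ⊆ Φ.simple)
    (ϖ : V → V) (hϖ : Φ.IsFundamentalWeights ϖ)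
    (d : V → ℝ) (hd : ∀ α ∈ Φ.simple \ I, 0 ≤ d α ∧ d α < 1) :
    ∀ β ∈ Φ.posRoots \ Φ.posRootsOf I,
      0 < cpair ((2 : ℝ) • Φ.rhoP I - Φ.rho - ∑ α ∈ Φ.simple \ I, d α • ϖ α) β := by
  classical
  intro β hβ
  rw [Finset.mem_sdiff] at hβ
  obtain ⟨hβP, hβT⟩ := hβ
  have hβr : β ∈ Φ.roots := KLTAux.posRoots_subset Φ hβP
  have hββ : 0 < ⟪β, β⟫ := KLTAux.root_inner_pos Φ hβr
  obtain ⟨l, hl, hlong⟩ := KLTAux.exists_w hϖ hI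
  have hroots : ∀ a ∈ l, a ∈ Φ.roots := fun a ha => KLTAux.simple_root Φ (hI (hl a ha))
  set σv := ∑ γ ∈ Φ.posRoots \ Φ.posRootsOf I, γ with hσv
  set τv := ∑ γ ∈ Φ.posRootsOf I, γ with hτv
  set u : V := Φ.rho - ∑ γ ∈ Φ.simple \ I, ϖ γ with hu
  have hρ : Φ.rho = (2:ℝ)⁻¹ • (σv + τv) := by
    rw [RCRS.rho]
    congr 1
    rw [hσv, hτv]
    exact (Finset.sum_sdiff (KLTAux.posRootsOf_subset Φ I)).symm
  have hwσ : RCRS.wordProd l σv = σv := KLTAux.wp_sigma_fix hϖ hI hl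
  have hwτ : RCRS.wordProd l τv = -τv := KLTAux.wp_tau_neg hϖ hI hl hlong
  have hwϖ : RCRS.wordProd l (∑ γ ∈ Φ.simple \ I, ϖ γ) = ∑ γ ∈ Φ.simple \ I, ϖ γ := by
    rw [KLTAux.wp_sum]
    exact Finset.sum_congr rfl fun γ hγ =>
      KLTAux.wp_fw_fix hϖ hI hl (Finset.mem_sdiff.mp hγ).1 (Finset.mem_sdiff.mp hγ).2
  have hwu : RCRS.wordProd l u
      = (2:ℝ)⁻¹ • (σv - τv) - ∑ γ ∈ Φ.simple \ I, ϖ γ := by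
    rw [hu, KLTAux.wp_sub, hρ, KLTAux.wp_smul, KLTAux.wp_add, hwσ, hwτ, hwϖ,
      ← sub_eq_add_neg]
  have hX : (2:ℝ) • Φ.rhoP I - Φ.rho - ∑ α ∈ Φ.simple \ I, d α • ϖ α
      = RCRS.wordProd l u + ∑ α ∈ Φ.simple \ I, (1 - d α) • ϖ α := by
    have hsplit : ∑ α ∈ Φ.simple \ I, (1 - d α) • ϖ α
        = (∑ γ ∈ Φ.simple \ I, ϖ γ) - ∑ α ∈ Φ.simple \ I, d α • ϖ α := by
      rw [← Finset.sum_sub_distrib]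
      exact Finset.sum_congr rfl fun α _ => by rw [sub_smul, one_smul]
    rw [hwu, hsplit, hρ, RCRS.rhoP, ← hσv]
    module
  rw [KLTAux.cpair_eq]
  have hmain : 0 < ⟪(2:ℝ) • Φ.rhoP I - Φ.rho - ∑ α ∈ Φ.simple \ I, d α • ϖ α, β⟫ := by
    rw [hX, inner_add_left]
    have h1 : 0 ≤ ⟪RCRS.wordProd l u, β⟫ := by
      set δ := RCRS.wordProd l.reverse β with hδ
      have hδmem : δ ∈ Φ.posRoots \ Φ.posRootsOf I :=
        KLTAux.wp_sdiff hϖ hI (fun a ha => hl a (List.mem_reverse.mp ha))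
          (Finset.mem_sdiff.mpr ⟨hβP, hβT⟩)
      have hβδ : β = RCRS.wordProd l δ := (KLTAux.wp_reverse_cancel Φ hroots β).symm
      rw [hβδ, KLTAux.wp_inner Φ hroots]
      exact KLTAux.inner_u_nonneg hϖ hI (Finset.mem_sdiff.mp hδmem).1
    have h2 : 0 < ⟪∑ α ∈ Φ.simple \ I, (1 - d α) • ϖ α, β⟫ := by
      rw [sum_inner]
      refine Finset.sum_pos' (fun α hα => ?_) ?_
      · rw [real_inner_smul_left]
        have hdα := hd α hα
        exact mul_nonneg (by linarith [hdα.2])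
          (KLTAux.posRoot_inner_fw_nonneg hϖ hβP (Finset.mem_sdiff.mp hα).1)
      · have hex : ∃ α ∈ Φ.simple \ I, ⟪ϖ α, β⟫ ≠ 0 := by
          by_contra h
          push_neg at h
          exact hβT (KLTAux.mem_posRootsOf_of_vanishing hϖ hI hβP
            (fun γ hγ hγI => h γ (Finset.mem_sdiff.mpr ⟨hγ, hγI⟩)))
        obtain ⟨α₀, hα₀, hne⟩ := hex
        refine ⟨α₀, hα₀, ?_⟩
        rw [real_inner_smul_left]
        have hpos : 0 < ⟪ϖ α₀, β⟫ :=
          lt_of_le_of_ne (KLTAux.posRoot_inner_fw_nonneg hϖ hβP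
            (Finset.mem_sdiff.mp hα₀).1) (Ne.symm hne)
        have hdα := hd α₀ hα₀
        exact mul_pos (by linarith [hdα.2]) hpos
    linarith
  exact div_pos (by linarith) hββ
end
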